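/- arXiv:math/0210022 — 2 statements merged into one kernel-verified Lean document; each statement's English description precedes it below -/
import Mathlib

section
/- Let π : E → B be a fiber bundle with fiber F, B connected and locally connected, and F having exactly k connected components, each of which is preserved setwise by the transition homeomorphisms (i.e., the structure group acts trivially on π₀(F)). Then E has exactly k connected components, and π restricted to each component of E is a fiber bundle over B whose fiber is the corresponding component of F. -/
/-- `π : E → B` is a fiber bundle with fiber `F`: it is continuous and every point of the
base has an open neighborhood `U` with a homeomorphism `π ⁻¹' U ≃ₜ U × F` commuting with
the projections. -/
def IsFiberBundleWithFiber {E B : Type*} (F : Type*) [TopologicalSpace E]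
    [TopologicalSpace B] [TopologicalSpace F] (π : E → B) : Prop :=
  Continuous π ∧ ∀ b : B, ∃ U : Set B, IsOpen U ∧ b ∈ U ∧
    ∃ e : (π ⁻¹' U) ≃ₜ U × F, ∀ z : π ⁻¹' U, ((e z).1 : B) = π z

open Set Function

/-- Restrict a local trivialization to a subset `S` of the total space which corresponds
fiberwise to a subset `T` of the fiber. -/
def restrictHomeo {E B F : Type*} [TopologicalSpace E] [TopologicalSpace B]
    [TopologicalSpace F] (π : E → B) (Us : Set B) (e : (π ⁻¹' Us) ≃ₜ Us × F)
    (S : Set E) (T : Set F) (key : ∀ x : π ⁻¹' Us, (x : E) ∈ S ↔ (e x).2 ∈ T) :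
    ((fun w : S => π (w : E)) ⁻¹' Us) ≃ₜ Us × T where
  toFun w := ((e ⟨w.1.1, w.2⟩).1, ⟨(e ⟨w.1.1, w.2⟩).2, (key _).1 w.1.2⟩)
  invFun p := ⟨⟨(e.symm (p.1, p.2.1) : E),
      (key _).2 (by rw [e.apply_symm_apply]; exact p.2.2)⟩,
    (e.symm (p.1, p.2.1)).2⟩
  left_inv w := by
    apply Subtype.ext; apply Subtype.ext
    show ((e.symm _ : π ⁻¹' Us) : E) = _
    rw [Prod.mk.eta, e.symm_apply_apply]
  right_inv p := by
    refine Prod.ext ?_ ?_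
    · show (e (e.symm (p.1, p.2.1))).1 = p.1
      rw [e.apply_symm_apply]
    · apply Subtype.ext
      show (e (e.symm (p.1, p.2.1))).2 = p.2.1
      rw [e.apply_symm_apply]
  continuous_toFun := by
    have hx : Continuous (fun w : ((fun w : S => π (w : E)) ⁻¹' Us) =>
        (⟨w.1.1, w.2⟩ : π ⁻¹' Us)) :=
      (continuous_subtype_val.comp continuous_subtype_val).subtype_mk _
    exact (continuous_fst.comp (e.continuous.comp hx)).prodMk
      ((continuous_snd.comp (e.continuous.comp hx)).subtype_mk _)
  continuous_invFun := by
    have hx : Continuous (fun p : Us × T => e.symm (p.1, p.2.1)) :=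
      e.symm.continuous.comp (continuous_fst.prodMk
        (continuous_subtype_val.comp continuous_snd))
    exact ((continuous_subtype_val.comp hx).subtype_mk _).subtype_mk _

/-- let `π : E → B` be a fiber bundle with fiber `F`, given by trivializations
`e i` over an open cover `U i` of the connected, locally connected base `B`, whose
transition homeomorphisms preserve each connected component of `F` setwise. If `F` has
exactly `k` connected components, then `E` has exactly `k` connected components, and `π`
restricted to each connected component of `E` is a fiber bundle over `B` whose fiber is the
corresponding connected component of `F`. -/
theorem components_of_fiberBundle_trivial_pi0_action {E B F : Type*} [TopologicalSpace E]
    [TopologicalSpace B] [TopologicalSpace F] [ConnectedSpace B] [LocallyConnectedSpace B]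
    (π : E → B) (hπ : Continuous π) {ι : Type*}
    (U : ι → Set B) (hUo : ∀ i, IsOpen (U i)) (hUcov : ∀ b : B, ∃ i, b ∈ U i)
    (e : ∀ i, (π ⁻¹' U i) ≃ₜ (U i) × F)
    (he : ∀ i (z : π ⁻¹' U i), ((e i z).1 : B) = π z)
    (htrans : ∀ i j (z : π ⁻¹' U i) (w : π ⁻¹' U j), (z : E) = (w : E) →
      connectedComponent ((e i z).2) = connectedComponent ((e j w).2))
    (k : ℕ) (hk : Nat.card (ConnectedComponents F) = k) :
    Nat.card (ConnectedComponents E) = k ∧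
    ∀ z : E, ∃ f : F,
      IsFiberBundleWithFiber (↥(connectedComponent f))
        (fun w : ↥(connectedComponent z) => π (w : E)) := by
  classical
  -- the "component of the fiber coordinate" map
  set φ : E → ConnectedComponents F := fun z =>
    ConnectedComponents.mk ((e (hUcov (π z)).choose ⟨z, (hUcov (π z)).choose_spec⟩).2) with hφdef
  have hφ : ∀ (z : E) (i : ι) (h : π z ∈ U i),
      φ z = ConnectedComponents.mk ((e i ⟨z, h⟩).2) := fun z i h =>
    ConnectedComponents.coe_eq_coe.2 (htrans _ i _ ⟨z, h⟩ rfl)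
  have hφc : Continuous φ := by
    rw [continuous_iff_continuousAt]
    intro z
    obtain ⟨i, hi⟩ := hUcov (π z)
    have hopen : IsOpen (π ⁻¹' U i) := (hUo i).preimage hπ
    have hco : ContinuousOn φ (π ⁻¹' U i) := by
      rw [continuousOn_iff_continuous_restrict]
      have hrestr : (π ⁻¹' U i).restrict φ = fun x => ConnectedComponents.mk ((e i x).2) := by
        funext x
        exact hφ x.1 i x.2
      show Continuous ((π ⁻¹' U i).restrict φ)
      rw [hrestr]
      exact ConnectedComponents.continuous_coe.comp (continuous_snd.comp (e i).continuous)
    exact hco.continuousAt (hopen.mem_nhds hi)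
  -- every base point carries a point of every fiber component
  have hpt : ∀ (c : ConnectedComponents F) (b : B), ∃ w : E, φ w = c ∧ π w = b := by
    intro c b
    obtain ⟨f, hf⟩ := ConnectedComponents.surjective_coe c
    obtain ⟨i, hi⟩ := hUcov b
    have hmem : (((e i).symm (⟨b, hi⟩, f) : π ⁻¹' U i) : E) ∈ π ⁻¹' U i :=
      ((e i).symm (⟨b, hi⟩, f)).2
    refine ⟨((e i).symm (⟨b, hi⟩, f) : E), ?_, ?_⟩
    · rw [hφ _ i hmem]
      have hx : (⟨_, hmem⟩ : π ⁻¹' U i) = (e i).symm (⟨b, hi⟩, f) := rfl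
      rw [hx, (e i).apply_symm_apply]
      exact hf
    · have hb := he i ((e i).symm (⟨b, hi⟩, f))
      rw [(e i).apply_symm_apply] at hb
      exact hb.symm
  -- connected components of `E` are exactly the fibers of `φ`
  have hcomp : ∀ z : E, connectedComponent z = φ ⁻¹' {φ z} := by
    intro z
    apply Subset.antisymm
    · intro w hw
      have h1 := hφc.mapsTo_connectedComponent z hw
      rw [connectedComponent_eq_singleton] at h1
      simpa using h1
    · intro w hw
      simp only [mem_preimage, mem_singleton_iff] at hw
      set c := φ z with hc
      have hUcov2 : ∀ b : B, ∃ i, b ∈ U i := hUcov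
      choose ib hib using hUcov2
      set V : B → Set B := fun b => connectedComponentIn (U (ib b)) b with hV
      have hVopen : ∀ b, IsOpen (V b) := fun b => (hUo (ib b)).connectedComponentIn
      have hVmem : ∀ b, b ∈ V b := fun b => mem_connectedComponentIn (hib b)
      have hVsub : ∀ b, V b ⊆ U (ib b) := fun b => connectedComponentIn_subset _ _
      set T : B → Set E := fun b => φ ⁻¹' {c} ∩ π ⁻¹' (V b) with hT
      have hTconn : ∀ b, IsPreconnected (T b) := by
        intro b
        obtain ⟨f, hf⟩ := ConnectedComponents.surjective_coe c
        have himg : T b = (fun p : (U (ib b)) × F => ((e (ib b)).symm p : E)) ''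
            ((Subtype.val ⁻¹' V b) ×ˢ connectedComponent f) := by
          ext w'
          constructor
          · rintro ⟨hw1, hw2⟩
            have hU' : π w' ∈ U (ib b) := hVsub b hw2
            refine ⟨e (ib b) ⟨w', hU'⟩, ⟨?_, ?_⟩, ?_⟩
            · show ((e (ib b) ⟨w', hU'⟩).1 : B) ∈ V b
              rw [he]
              exact hw2
            · have hmkeq : ConnectedComponents.mk ((e (ib b) ⟨w', hU'⟩).2)
                  = ConnectedComponents.mk f := by
                rw [← hφ w' (ib b) hU', hw1, ← hf]
              exact ConnectedComponents.coe_eq_coe'.1 hmkeq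
            · show ((e (ib b)).symm (e (ib b) ⟨w', hU'⟩) : E) = w'
              rw [(e (ib b)).symm_apply_apply]
          · rintro ⟨p, ⟨hp1, hp2⟩, rfl⟩
            have hx : (⟨(((e (ib b)).symm p : π ⁻¹' U (ib b)) : E),
                ((e (ib b)).symm p).2⟩ : π ⁻¹' U (ib b)) = (e (ib b)).symm p := rfl
            constructor
            · show φ (((e (ib b)).symm p : π ⁻¹' U (ib b)) : E) = c
              rw [hφ _ (ib b) ((e (ib b)).symm p).2, hx,
                (e (ib b)).apply_symm_apply, ← hf]
              exact ConnectedComponents.coe_eq_coe'.2 hp2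
            · show π (((e (ib b)).symm p : π ⁻¹' U (ib b)) : E) ∈ V b
              have hbv := he (ib b) ((e (ib b)).symm p)
              rw [(e (ib b)).apply_symm_apply] at hbv
              rw [← hbv]
              exact hp1
        rw [himg]
        apply IsPreconnected.image _ _
          (Continuous.continuousOn (continuous_subtype_val.comp (e (ib b)).symm.continuous))
        apply IsPreconnected.prod
        · have himg2 : (Subtype.val : (U (ib b)) → B) ''
              (Subtype.val ⁻¹' V b) = V b := by
            rw [Subtype.image_preimage_coe]
            exact inter_eq_self_of_subset_right (hVsub b)
          have hVpre : IsPreconnected (V b) := isPreconnected_connectedComponentIn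
          rw [← himg2] at hVpre
          exact Topology.IsInducing.subtypeVal.isPreconnected_image.1 hVpre
        · exact isPreconnected_connectedComponent
      set D := {b : B | T b ⊆ connectedComponent z} with hD
      have hstep : ∀ b b', b' ∈ V b → b ∈ D → b' ∈ D := by
        intro b b' hb' hb
        obtain ⟨w', hw'c, hw'π⟩ := hpt c b'
        have hwTb : w' ∈ T b := ⟨hw'c, by show π w' ∈ V b; rw [hw'π]; exact hb'⟩
        have hwTb' : w' ∈ T b' := ⟨hw'c, by show π w' ∈ V b'; rw [hw'π]; exact hVmem b'⟩
        have hw'comp : w' ∈ connectedComponent z := hb hwTb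
        have h1 : T b' ⊆ connectedComponent w' := (hTconn b').subset_connectedComponent hwTb'
        rw [← connectedComponent_eq hw'comp] at h1
        exact h1
      have hstep2 : ∀ b b', b' ∈ V b → b' ∈ D → b ∈ D := by
        intro b b' hb' hb
        obtain ⟨w', hw'c, hw'π⟩ := hpt c b'
        have hwTb : w' ∈ T b := ⟨hw'c, by show π w' ∈ V b; rw [hw'π]; exact hb'⟩
        have hwTb' : w' ∈ T b' := ⟨hw'c, by show π w' ∈ V b'; rw [hw'π]; exact hVmem b'⟩
        have hw'comp : w' ∈ connectedComponent z := hb hwTb'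
        have h1 : T b ⊆ connectedComponent w' := (hTconn b).subset_connectedComponent hwTb
        rw [← connectedComponent_eq hw'comp] at h1
        exact h1
      have hDclopen : IsClopen D := by
        constructor
        · rw [← isOpen_compl_iff, isOpen_iff_forall_mem_open]
          intro b hb
          refine ⟨V b, ?_, hVopen b, hVmem b⟩
          intro b' hb' hbD'
          exact hb (hstep2 b b' hb' hbD')
        · rw [isOpen_iff_forall_mem_open]
          intro b hb
          exact ⟨V b, fun b' hb' => hstep b b' hb' hb, hVopen b, hVmem b⟩
      have hzT : z ∈ T (π z) := ⟨rfl, hVmem (π z)⟩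
      have hDz : π z ∈ D := (hTconn (π z)).subset_connectedComponent hzT
      have hDuniv : D = univ := hDclopen.eq_univ ⟨π z, hDz⟩
      have hDw : π w ∈ D := by rw [hDuniv]; trivial
      exact hDw ⟨hw, hVmem (π w)⟩
  constructor
  · -- count of components
    rw [← hk]
    have hbij : Function.Bijective hφc.connectedComponentsLift := by
      constructor
      · intro a b hab
        obtain ⟨x, rfl⟩ := ConnectedComponents.surjective_coe a
        obtain ⟨y, rfl⟩ := ConnectedComponents.surjective_coe b
        rw [hφc.connectedComponentsLift_apply_coe, hφc.connectedComponentsLift_apply_coe] at hab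
        rw [ConnectedComponents.coe_eq_coe', hcomp y]
        simpa using hab
      · intro cc
        obtain ⟨b⟩ : Nonempty B := inferInstance
        obtain ⟨w, hwc, -⟩ := hpt cc b
        exact ⟨ConnectedComponents.mk w,
          by rw [hφc.connectedComponentsLift_apply_coe]; exact hwc⟩
    exact Nat.card_congr (Equiv.ofBijective _ hbij)
  · intro z
    obtain ⟨f, hf⟩ := ConnectedComponents.surjective_coe (φ z)
    refine ⟨f, hπ.comp continuous_subtype_val, ?_⟩
    intro b
    obtain ⟨i, hi⟩ := hUcov b
    refine ⟨U i, hUo i, hi, ?_⟩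
    have key : ∀ x : π ⁻¹' U i,
        (x : E) ∈ connectedComponent z ↔ (e i x).2 ∈ connectedComponent f := by
      intro x
      rw [hcomp z, mem_preimage, mem_singleton_iff, hφ (x : E) i x.2, ← hf]
      exact ConnectedComponents.coe_eq_coe'
    exact ⟨restrictHomeo π (U i) (e i) _ _ key, fun w => he i ⟨w.1.1, w.2⟩⟩
end

section
/- Let X, Y be topological spaces, A ⊆ X and B ⊆ Y closed with dense complements, X and Y locally connected, and suppose h : X → Y is a homeomorphism with h(A) = B. Then the induced map h^N between the germ-construction normalizers N_X and N_Y is a homeomorphism satisfying n_Y ∘ h^N = h ∘ n_X. -/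
open TopologicalSpace

/-- The set of connected components of a subset `S` of a topological space. -/
def comps {X : Type*} [TopologicalSpace X] (S : Set X) : Set (Set X) :=
  {C | ∃ y ∈ S, C = connectedComponentIn S y}

/-- A point of the normalizer of `(X, A)`: a point `x ∈ X` together with a compatible
system `ξ` assigning to each open neighborhood `U` of `x` a connected component of
`U \ A` having `x` in its closure; compatibility means `ξ U ⊆ ξ V` whenever `U ⊆ V`. -/
structure NormPoint (X : Type*) [TopologicalSpace X] (A : Set X) where
  pt : X
  sys : Set X → Set X
  isComp : ∀ U : Set X, IsOpen U → pt ∈ U → sys U ∈ comps (U \ A)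
  mem_closure : ∀ U : Set X, IsOpen U → pt ∈ U → pt ∈ closure (sys U)
  compat : ∀ U V : Set X, IsOpen U → IsOpen V → pt ∈ U → pt ∈ V → U ⊆ V → sys U ⊆ sys V

/-- The basic open sets `Ũ_C` of the normalizer: for `U ⊆ X` open and `C` a connected
component of `U \ A`, the set of normalizer points `(x, ξ)` with `x ∈ U` and `ξ U = C`. -/
def normBasis (X : Type*) [TopologicalSpace X] (A : Set X) : Set (Set (NormPoint X A)) :=
  {B | ∃ (U : Set X) (C : Set X), IsOpen U ∧ C ∈ comps (U \ A) ∧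
    B = {p : NormPoint X A | p.pt ∈ U ∧ p.sys U = C}}

/-- The normalizer topology, generated by the basic open sets `Ũ_C`. -/
instance (X : Type*) [TopologicalSpace X] (A : Set X) : TopologicalSpace (NormPoint X A) :=
  generateFrom (normBasis X A)


open TopologicalSpace Set

/-- Auxiliary: the map on normalizer points induced by a homeomorphism. -/
def normMap {X Y : Type*} [TopologicalSpace X] [TopologicalSpace Y]
    {A : Set X} {B : Set Y} (h : X ≃ₜ Y) (hAB : h '' A = B)
    (p : NormPoint X A) : NormPoint Y B where
  pt := h p.pt
  sys := fun U => h '' p.sys (h ⁻¹' U)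
  isComp := fun U hU hx => by
    have hUA : h '' (h ⁻¹' U \ A) = U \ B := by
      rw [Set.image_diff h.injective, hAB, Set.image_preimage_eq U h.surjective]
    obtain ⟨y, hy, hC⟩ := p.isComp (h ⁻¹' U) (hU.preimage h.continuous) hx
    exact ⟨h y, hUA ▸ Set.mem_image_of_mem h hy, by
      show h '' p.sys (h ⁻¹' U) = _
      rw [hC, h.image_connectedComponentIn hy, hUA]⟩
  mem_closure := fun U hU hx => by
    have := p.mem_closure (h ⁻¹' U) (hU.preimage h.continuous) hx
    rw [← h.image_closure]
    exact Set.mem_image_of_mem h this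
  compat := fun U V hU hV hxU hxV hUV => by
    exact Set.image_mono (f := h)
      (p.compat _ _ (hU.preimage h.continuous) (hV.preimage h.continuous) hxU hxV
        (Set.preimage_mono hUV))

theorem normMap_symm_apply {X Y : Type*} [TopologicalSpace X] [TopologicalSpace Y]
    {A : Set X} {B : Set Y} (h : X ≃ₜ Y) (hAB : h '' A = B)
    (hBA : h.symm '' B = A) (p : NormPoint X A) :
    normMap h.symm hBA (normMap h hAB p) = p := by
  cases p with
  | mk pt sys isComp mc cp =>
    simp only [normMap, NormPoint.mk.injEq]
    constructor
    · exact h.symm_apply_apply pt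
    · funext U
      have h1 : h ⁻¹' (h.symm ⁻¹' U) = U := by
        ext x; simp
      rw [h1]
      ext x; simp

theorem normMap_continuous {X Y : Type*} [TopologicalSpace X] [TopologicalSpace Y]
    {A : Set X} {B : Set Y} (h : X ≃ₜ Y) (hAB : h '' A = B) :
    Continuous (normMap h hAB) := by
  rw [continuous_generateFrom_iff]
  rintro s ⟨U, C, hU, ⟨y, hy, hC⟩, rfl⟩
  apply isOpen_generateFrom_of_mem
  refine ⟨h ⁻¹' U, h.symm '' C, hU.preimage h.continuous, ?_, ?_⟩
  · have hBA : h.symm '' B = A := by rw [← hAB, Set.image_image]; simp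
    have hUA : h.symm '' (U \ B) = h ⁻¹' U \ A := by
      rw [Set.image_diff h.symm.injective, hBA]
      congr 1
      ext x
      constructor
      · rintro ⟨u, hu, rfl⟩; simpa using hu
      · intro hx; exact ⟨h x, hx, h.symm_apply_apply x⟩
    exact ⟨h.symm y, hUA ▸ Set.mem_image_of_mem _ hy, by
      rw [hC, h.symm.image_connectedComponentIn hy, hUA]⟩
  · ext p
    simp only [normMap, Set.mem_setOf_eq, Set.mem_preimage]
    constructor
    · rintro ⟨h1, h2⟩
      refine ⟨h1, ?_⟩
      rw [← h2]
      ext x; simp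
    · rintro ⟨h1, h2⟩
      refine ⟨h1, ?_⟩
      rw [h2]
      ext x; simp

/-- a homeomorphism `h : X ≃ₜ Y` with `h '' A = B` induces a homeomorphism
`h^N : N_X ≃ₜ N_Y` of the germ-construction normalizers with `n_Y ∘ h^N = h ∘ n_X`. -/
theorem normPoint_homeomorph (X Y : Type*) [TopologicalSpace X] [TopologicalSpace Y]
    [LocallyConnectedSpace X] [LocallyConnectedSpace Y]
    (A : Set X) (B : Set Y) (hA : IsClosed A) (hB : IsClosed B)
    (hdA : Dense Aᶜ) (hdB : Dense Bᶜ) (h : X ≃ₜ Y) (hAB : h '' A = B) :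
    ∃ hN : NormPoint X A ≃ₜ NormPoint Y B,
      ∀ p : NormPoint X A, (hN p).pt = h p.pt := by
  have hBA : h.symm '' B = A := by
    rw [← hAB, Set.image_image]; simp
  have hAB' : h.symm.symm '' A = B := by simpa using hAB
  refine ⟨⟨⟨normMap h hAB, normMap h.symm hBA, normMap_symm_apply h hAB hBA, ?_⟩,
    normMap_continuous h hAB, normMap_continuous h.symm hBA⟩, fun p => rfl⟩
  intro q
  have := normMap_symm_apply h.symm hBA hAB' q
  convert this using 2
  exact h.symm_symm.symm
end
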